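/- Suppose μ is a probability measure on {0,1}^n such that for every k ∈ [t], every measure obtained from μ by conditioning on the values of n − 2k coordinates has the antipodal pairs property. Then the sequences (μ(|η|=i)/C(n,i))_{i=0}^{t+1} and (μ(|η|=i)/C(n,i))_{i=n−t−1}^{n} are log-concave. -/

import Mathlib

open Finset

/-- Number of ones of `η ∈ {0,1}^n`. -/
def wt {n : ℕ} (η : Fin n → Bool) : ℕ := (univ.filter fun i => η i = true).card

/-- Total mass of the event that `η` agrees with `ξ` on the coordinates in `I`. -/
noncomputable def condZ {n : ℕ} (μ : (Fin n → Bool) → ℝ) (I : Finset (Fin n))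
    (ξ : Fin n → Bool) : ℝ :=
  ∑ η ∈ univ.filter (fun η : Fin n → Bool => ∀ i ∈ I, η i = ξ i), μ η

/-- Flip all coordinates outside `I` (antipode in the conditioned cube). -/
def flipOutside {n : ℕ} (I : Finset (Fin n)) (η : Fin n → Bool) : Fin n → Bool :=
  fun i => if i ∈ I then η i else !η i

/-- `γ_j` of the measure obtained from `μ` by conditioning on the values `ξ` of the
coordinates in `I`, regarded as a measure on the remaining `n - |I|` coordinates. -/
noncomputable def condGamma {n : ℕ} (μ : (Fin n → Bool) → ℝ) (I : Finset (Fin n))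
    (ξ : Fin n → Bool) (j : ℕ) : ℝ :=
  (((n - I.card).choose j : ℝ))⁻¹ *
    ∑ η ∈ univ.filter (fun η : Fin n → Bool =>
        (∀ i ∈ I, η i = ξ i) ∧ (univ.filter fun i => i ∉ I ∧ η i = true).card = j),
      (μ η / condZ μ I ξ) * (μ (flipOutside I η) / condZ μ I ξ)

/-- Rank sequence of `μ`. -/
noncomputable def rankSeq {n : ℕ} (μ : (Fin n → Bool) → ℝ) (i : ℕ) : ℝ :=
  ∑ η ∈ univ.filter (fun η : Fin n → Bool => wt η = i), μ η

def agr {n : ℕ} (η ζ : Fin n → Bool) : Finset (Fin n) := univ.filter fun j => η j = ζ j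

def maskTo {n : ℕ} (I : Finset (Fin n)) (η : Fin n → Bool) : Fin n → Bool :=
  fun j => if j ∈ I then η j else false

def QIdx (n i : ℕ) : Finset (ℕ × Finset (Fin n) × (Fin n → Bool)) :=
  ((Finset.range (i + 1)) ×ˢ (((univ : Finset (Fin n)).powerset) ×ˢ (univ : Finset (Fin n → Bool)))).filter
    (fun p => 1 ≤ p.1 ∧ p.2.1.card + 2 * p.1 = n ∧ (∀ j ∉ p.2.1, p.2.2 j = false)
      ∧ wt p.2.2 + p.1 = i)

def comOnes {n : ℕ} (η ζ : Fin n → Bool) : ℕ :=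
  (univ.filter fun j => η j = true ∧ ζ j = true).card

def indic {n : ℕ} (A : Finset (Fin n)) : Fin n → Bool := fun j => decide (j ∈ A)
def onesF {n : ℕ} (η : Fin n → Bool) : Finset (Fin n) := univ.filter fun j => η j = true

variable {n : ℕ}

lemma powerset_coef_sum (s : ℝ) {i : ℕ} (D : Finset (Fin n)) (hD : D.card ≤ i) :
    ∑ S ∈ D.powerset, s ^ (i - S.card) * (1 - s) ^ S.card = s ^ (i - D.card) := by
  have h : ∀ S ∈ D.powerset, s ^ (i - S.card) * (1 - s) ^ S.card
      = s ^ (i - D.card) * ((1 - s) ^ S.card * s ^ (D.card - S.card)) := by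
    intro S hS
    have hSD : S.card ≤ D.card := card_le_card (mem_powerset.mp hS)
    have h2 : i - S.card = (i - D.card) + (D.card - S.card) := by omega
    rw [h2, pow_add]; ring
  rw [sum_congr rfl h, ← mul_sum, Finset.sum_pow_mul_eq_add_pow]
  simp

lemma pair_pow_identity {i : ℕ} (v : Finset (Fin n) → ℝ) (s : ℝ) :
    ∑ x ∈ (powersetCard i (univ : Finset (Fin n))) ×ˢ powersetCard i univ,
      v x.1 * v x.2 * s ^ (i - (x.1 ∩ x.2).card)
    = ∑ S ∈ (univ : Finset (Fin n)).powerset,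
        s ^ (i - S.card) * (1 - s) ^ S.card *
          (∑ A ∈ (powersetCard i univ).filter (fun A => S ⊆ A), v A) ^ 2 := by
  have hsq : ∀ S : Finset (Fin n),
      s ^ (i - S.card) * (1 - s) ^ S.card *
          (∑ A ∈ (powersetCard i univ).filter (fun A => S ⊆ A), v A) ^ 2
      = ∑ x ∈ ((powersetCard i (univ : Finset (Fin n))) ×ˢ powersetCard i univ).filter
            (fun x => S ⊆ x.1 ∧ S ⊆ x.2),
          s ^ (i - S.card) * (1 - s) ^ S.card * (v x.1 * v x.2) := by
    intro S
    rw [Finset.filter_product, sq, Finset.sum_mul_sum, ← Finset.sum_product', mul_sum]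
  rw [sum_congr rfl (fun S _ => hsq S)]
  simp only [Finset.sum_filter]
  rw [Finset.sum_comm]
  refine sum_congr rfl fun x hx => ?_
  obtain ⟨hx1, hx2⟩ := mem_product.mp hx
  have hA := mem_powersetCard.mp hx1
  have hB := mem_powersetCard.mp hx2
  have hsub : ((univ : Finset (Fin n)).powerset.filter (fun S => S ⊆ x.1 ∩ x.2))
      = (x.1 ∩ x.2).powerset := by
    ext S
    simp only [mem_filter, mem_powerset]
    exact ⟨fun h => h.2, fun h => ⟨subset_univ S, h⟩⟩
  symm
  calc ∑ S ∈ (univ : Finset (Fin n)).powerset,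
        (if S ⊆ x.1 ∧ S ⊆ x.2 then s ^ (i - S.card) * (1 - s) ^ S.card * (v x.1 * v x.2) else 0)
      = ∑ S ∈ ((univ : Finset (Fin n)).powerset.filter (fun S => S ⊆ x.1 ∩ x.2)),
          s ^ (i - S.card) * (1 - s) ^ S.card * (v x.1 * v x.2) := by
        rw [Finset.sum_filter]
        refine sum_congr rfl fun S _ => ?_
        congr 1
        simp [subset_inter_iff]
    _ = (∑ S ∈ (x.1 ∩ x.2).powerset, s ^ (i - S.card) * (1 - s) ^ S.card) * (v x.1 * v x.2) := by
        rw [hsub, sum_mul]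
    _ = v x.1 * v x.2 * s ^ (i - (x.1 ∩ x.2).card) := by
        rw [powerset_coef_sum s _ (le_trans (card_le_card inter_subset_left) hA.2.le)]
        ring


lemma psdIneq {i : ℕ} (v : Finset (Fin n) → ℝ) :
    0 ≤ ∑ x ∈ (powersetCard i (univ : Finset (Fin n))) ×ˢ powersetCard i univ,
        v x.1 * v x.2 * (1 / (((i - (x.1 ∩ x.2).card : ℕ) : ℝ) + 1)) := by
  have key : ∀ x ∈ (powersetCard i (univ : Finset (Fin n))) ×ˢ powersetCard i univ,
      v x.1 * v x.2 * (1 / (((i - (x.1 ∩ x.2).card : ℕ) : ℝ) + 1))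
      = ∫ s in (0:ℝ)..1, v x.1 * v x.2 * s ^ (i - (x.1 ∩ x.2).card) := by
    intro x _
    rw [intervalIntegral.integral_const_mul, integral_pow]
    norm_num
  rw [sum_congr rfl key, ← intervalIntegral.integral_finset_sum]
  · apply intervalIntegral.integral_nonneg (by norm_num)
    intro u hu
    rw [pair_pow_identity]
    apply sum_nonneg
    intro S _
    have h1 : (0:ℝ) ≤ u := hu.1
    have h2 : (0:ℝ) ≤ 1 - u := by linarith [hu.2]
    exact mul_nonneg (mul_nonneg (pow_nonneg h1 _) (pow_nonneg h2 _)) (sq_nonneg _)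
  · intro x _
    exact ((continuous_const.mul (continuous_pow _)).intervalIntegrable 0 1)


lemma card_inter_fiber {i m : ℕ} (A : Finset (Fin n)) (hA : A.card = i) (hm : m ≤ i) :
    ((powersetCard i (univ : Finset (Fin n))).filter (fun B => (A ∩ B).card = m)).card
      = (i.choose m) * ((n - i).choose (i - m)) := by
  have hcard : ((powersetCard m A) ×ˢ (powersetCard (i - m) (univ \ A))).card
      = (i.choose m) * ((n - i).choose (i - m)) := by
    rw [card_product, card_powersetCard, card_powersetCard, hA, card_sdiff_of_subset (subset_univ A),
      card_univ, Fintype.card_fin, hA]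
  rw [← hcard]
  apply Finset.card_bij' (fun B _ => (A ∩ B, B \ A)) (fun q _ => q.1 ∪ q.2)
  · intro B hB
    obtain ⟨hB1, hB2⟩ := mem_filter.mp hB
    obtain ⟨_, hBc⟩ := mem_powersetCard.mp hB1
    have hsplit : (B ∩ A).card + (B \ A).card = B.card := Finset.card_inter_add_card_sdiff B A
    rw [inter_comm] at hsplit
    have hB2' : (A ∩ B).card = m := hB2
    refine mem_product.mpr ⟨mem_powersetCard.mpr ⟨inter_subset_left, hB2'⟩,
      mem_powersetCard.mpr ⟨?_, show (B \ A).card = i - m by omega⟩⟩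
    intro x hx
    simp only [mem_sdiff] at hx ⊢
    exact ⟨mem_univ x, hx.2⟩
  · intro q hq
    obtain ⟨hq1, hq2⟩ := mem_product.mp hq
    obtain ⟨hq1s, hq1c⟩ := mem_powersetCard.mp hq1
    obtain ⟨hq2s, hq2c⟩ := mem_powersetCard.mp hq2
    have hdisj : Disjoint q.1 q.2 := by
      refine disjoint_left.mpr fun a ha ha2 => ?_
      exact (mem_sdiff.mp (hq2s ha2)).2 (hq1s ha)
    have hAq : A ∩ (q.1 ∪ q.2) = q.1 := by
      ext a
      simp only [mem_inter, mem_union]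
      constructor
      · rintro ⟨haA, h | h⟩
        · exact h
        · exact absurd haA (mem_sdiff.mp (hq2s h)).2
      · intro h; exact ⟨hq1s h, Or.inl h⟩
    refine mem_filter.mpr ⟨mem_powersetCard.mpr ⟨subset_univ _, ?_⟩, by rw [hAq, hq1c]⟩
    rw [card_union_of_disjoint hdisj, hq1c, hq2c]; omega
  · intro B hB
    ext a
    simp only [mem_union, mem_inter, mem_sdiff]
    tauto
  · intro q hq
    obtain ⟨hq1, hq2⟩ := mem_product.mp hq
    obtain ⟨hq1s, _⟩ := mem_powersetCard.mp hq1
    obtain ⟨hq2s, _⟩ := mem_powersetCard.mp hq2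
    have : ∀ a ∈ q.2, a ∉ A := fun a ha => (mem_sdiff.mp (hq2s ha)).2
    refine Prod.ext ?_ ?_
    · ext a
      simp only [mem_inter, mem_union]
      constructor
      · rintro ⟨haA, h | h⟩
        · exact h
        · exact absurd haA (this a h)
      · intro h; exact ⟨hq1s h, Or.inl h⟩
    · ext a
      simp only [mem_sdiff, mem_union]
      constructor
      · rintro ⟨h | h, hna⟩
        · exact absurd (hq1s h) hna
        · exact h
      · intro h; exact ⟨Or.inr h, this a h⟩

lemma rowsum_eq {i : ℕ} (A : Finset (Fin n)) (hA : A.card = i) (f : ℕ → ℝ) :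
    ∑ B ∈ powersetCard i (univ : Finset (Fin n)), f ((A ∩ B).card)
      = ∑ m ∈ Finset.range (i + 1), ((i.choose m) * ((n - i).choose (i - m)) : ℕ) * f m := by
  rw [← Finset.sum_fiberwise_of_maps_to (g := fun B => (A ∩ B).card)
      (t := Finset.range (i + 1)) (fun B hB => by
        have h : (A ∩ B).card ≤ i := hA ▸ card_le_card inter_subset_left
        exact mem_range.mpr (Nat.lt_succ_of_le h)) (fun B => f ((A ∩ B).card))]
  refine sum_congr rfl fun m hm => ?_
  have hm' : m ≤ i := by have := mem_range.mp hm; omega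
  calc ∑ B ∈ (powersetCard i (univ : Finset (Fin n))).filter (fun B => (A ∩ B).card = m),
        f ((A ∩ B).card)
      = ∑ B ∈ (powersetCard i (univ : Finset (Fin n))).filter (fun B => (A ∩ B).card = m),
        f m := by
        refine sum_congr rfl fun B hB => ?_
        rw [(mem_filter.mp hB).2]
    _ = ((i.choose m) * ((n - i).choose (i - m)) : ℕ) * f m := by
        rw [sum_const, card_inter_fiber A hA hm', nsmul_eq_mul]


lemma choose_rowsum_identity {n i : ℕ} (hin : i ≤ n) :
    ∑ m ∈ Finset.range (i + 1), ((i.choose m) * ((n - i).choose (i - m)) : ℝ) *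
        (((i - m : ℕ) : ℝ) / (((i - m : ℕ) : ℝ) + 1))
      = ((i : ℝ) * ((n - i : ℕ) : ℝ)) / (((i : ℝ) + 1) * (((n - i : ℕ) : ℝ) + 1))
          * (n.choose i : ℝ) := by
  have V1 : ∑ m ∈ Finset.range (i + 1), (i.choose m) * ((n - i).choose (i - m)) = n.choose i := by
    have h := Nat.add_choose_eq i (n - i) i
    rw [Finset.Nat.sum_antidiagonal_eq_sum_range_succ_mk] at h
    rw [← h]; congr 1; omega
  have V2 : ∑ m ∈ Finset.range (i + 1), (i.choose m) * ((n - i + 1).choose (i - m + 1))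
      = (n + 1).choose (i + 1) := by
    have h := Nat.add_choose_eq i (n - i + 1) (i + 1)
    rw [Finset.Nat.sum_antidiagonal_eq_sum_range_succ_mk, Finset.sum_range_succ] at h
    simp only [Nat.choose_succ_self, zero_mul, add_zero] at h
    have hn1 : i + (n - i + 1) = n + 1 := by omega
    rw [hn1] at h
    rw [h]
    refine Finset.sum_congr rfl fun m hm => ?_
    have hm' : m ≤ i := by have := Finset.mem_range.mp hm; omega
    congr 2
    omega
  have hb : (0:ℝ) < ((n - i : ℕ) : ℝ) + 1 := by positivity
  have hterm : ∀ m ∈ Finset.range (i + 1),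
      ((i.choose m) * ((n - i).choose (i - m)) : ℝ) *
        (((i - m : ℕ) : ℝ) / (((i - m : ℕ) : ℝ) + 1))
      = ((i.choose m) * ((n - i).choose (i - m)) : ℝ)
        - ((i.choose m) * ((n - i + 1).choose (i - m + 1)) : ℝ) / (((n - i : ℕ) : ℝ) + 1) := by
    intro m hm
    set k := i - m with hk
    have hkpos : (0:ℝ) < (k : ℝ) + 1 := by positivity
    have hidR : (((n - i : ℕ) : ℝ) + 1) * (((n - i).choose k : ℕ) : ℝ)
        = (((n - i + 1).choose (k + 1) : ℕ) : ℝ) * ((k : ℝ) + 1) := by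
      have hid := Nat.add_one_mul_choose_eq (n - i) k
      exact_mod_cast congrArg (fun x : ℕ => (x : ℝ)) hid
    have h1 : (((n - i).choose k : ℕ) : ℝ) / ((k:ℝ) + 1)
        = (((n - i + 1).choose (k + 1) : ℕ) : ℝ) / (((n - i : ℕ) : ℝ) + 1) := by
      rw [div_eq_div_iff hkpos.ne' hb.ne']; linarith [hidR]
    push_cast
    rw [mul_div_assoc, ← h1]
    field_simp
    ring
  rw [Finset.sum_congr rfl hterm, Finset.sum_sub_distrib, ← Finset.sum_div]
  have cV1 : ∑ m ∈ Finset.range (i + 1), ((i.choose m) * ((n - i).choose (i - m)) : ℝ)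
      = (n.choose i : ℝ) := by exact_mod_cast congrArg (fun x : ℕ => (x : ℝ)) V1
  have cV2 : ∑ m ∈ Finset.range (i + 1), ((i.choose m) * ((n - i + 1).choose (i - m + 1)) : ℝ)
      = ((n + 1).choose (i + 1) : ℝ) := by exact_mod_cast congrArg (fun x : ℕ => (x : ℝ)) V2
  rw [cV1, cV2]
  have key : ((n:ℝ) + 1) * (n.choose i : ℝ) = ((n+1).choose (i+1) : ℝ) * ((i:ℝ) + 1) := by
    exact_mod_cast congrArg (fun x : ℕ => (x : ℝ)) (Nat.add_one_mul_choose_eq n i)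
  have hnab : (n : ℝ) = (i : ℝ) + ((n - i : ℕ) : ℝ) := by
    have : i + (n - i) = n := by omega
    exact_mod_cast (congrArg (fun x : ℕ => (x : ℝ)) this).symm
  have ha : (0:ℝ) < (i:ℝ) + 1 := by positivity
  rw [hnab] at key
  set X := (n.choose i : ℝ) with hX
  set Y := ((n + 1).choose (i + 1) : ℝ) with hY
  set a := (i : ℝ) with ha'
  set b := ((n - i : ℕ) : ℝ) with hb'
  have h1 : b + 1 ≠ 0 := hb.ne'
  have h2 : a + 1 ≠ 0 := ha.ne'
  field_simp
  linear_combination key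


lemma stepA {n i : ℕ} (hin : i ≤ n) (g : Finset (Fin n) → ℝ) :
    ∑ x ∈ (powersetCard i (univ : Finset (Fin n))) ×ˢ powersetCard i univ,
        (((i - (x.1 ∩ x.2).card : ℕ) : ℝ) / (((i - (x.1 ∩ x.2).card : ℕ) : ℝ) + 1))
          * (g x.1 * g x.2)
      ≤ ((i : ℝ) * ((n - i : ℕ) : ℝ)) / (((i : ℝ) + 1) * (((n - i : ℕ) : ℝ) + 1))
          * (∑ A ∈ powersetCard i univ, g A) ^ 2 := by
  classical
  set P := powersetCard i (univ : Finset (Fin n)) with hP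
  set cf : ℕ → ℝ := fun d => (((i - d : ℕ) : ℝ) / (((i - d : ℕ) : ℝ) + 1)) with hcf
  set R : ℝ := ((i : ℝ) * ((n - i : ℕ) : ℝ)) / (((i : ℝ) + 1) * (((n - i : ℕ) : ℝ) + 1)) with hR
  have hNpos : (0:ℝ) < (n.choose i : ℝ) := by exact_mod_cast Nat.choose_pos hin
  set N : ℝ := (n.choose i : ℝ) with hN
  have hcardP : (P.card : ℝ) = N := by
    rw [hP, card_powersetCard, card_univ, Fintype.card_fin]
  set σ : ℝ := ∑ A ∈ P, g A with hσ
  set β : ℝ := σ / N with hβ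
  set v : Finset (Fin n) → ℝ := fun A => g A - β with hv
  have hvsum : ∑ A ∈ P, v A = 0 := by
    rw [hv]
    rw [Finset.sum_sub_distrib, Finset.sum_const, nsmul_eq_mul, hcardP, hβ]
    field_simp
    exact sub_self _
  set ρ : ℝ := R * N with hρ
  have hrow : ∀ A ∈ P, ∑ B ∈ P, cf ((A ∩ B).card) = ρ := by
    intro A hA
    have hAc : A.card = i := (mem_powersetCard.mp hA).2
    rw [rowsum_eq A hAc]
    rw [hρ, hR, hN, ← choose_rowsum_identity hin]
    refine Finset.sum_congr rfl fun m hm => ?_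
    push_cast
    ring
  have hcol : ∀ B ∈ P, ∑ A ∈ P, cf ((A ∩ B).card) = ρ := by
    intro B hB
    have : ∀ A ∈ P, cf ((A ∩ B).card) = cf ((B ∩ A).card) := by
      intro A _; rw [inter_comm]
    rw [Finset.sum_congr rfl this, hrow B hB]
  have hgv : ∀ A, g A = v A + β := fun A => by rw [hv]; ring
  have expand : ∀ x ∈ P ×ˢ P, cf ((x.1 ∩ x.2).card) * (g x.1 * g x.2)
      = cf ((x.1 ∩ x.2).card) * (v x.1 * v x.2)
        + (cf ((x.1 ∩ x.2).card) * v x.1) * β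
        + (cf ((x.1 ∩ x.2).card) * v x.2) * β
        + cf ((x.1 ∩ x.2).card) * (β * β) := by
    intro x _
    rw [hgv x.1, hgv x.2]; ring
  rw [Finset.sum_congr rfl expand]
  rw [Finset.sum_add_distrib, Finset.sum_add_distrib, Finset.sum_add_distrib]
  have T2 : ∑ x ∈ P ×ˢ P, (cf ((x.1 ∩ x.2).card) * v x.1) * β = 0 := by
    rw [Finset.sum_product]
    have h5 : ∀ A ∈ P, ∑ B ∈ P, (cf ((A ∩ B).card) * v A) * β = ρ * v A * β := by
      intro A hA
      rw [← Finset.sum_mul, ← Finset.sum_mul, hrow A hA]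
    rw [Finset.sum_congr rfl h5]
    have h6 : ∀ A ∈ P, ρ * v A * β = (ρ * β) * v A := fun A _ => by ring
    rw [Finset.sum_congr rfl h6, ← Finset.mul_sum, hvsum, mul_zero]
  have T3 : ∑ x ∈ P ×ˢ P, (cf ((x.1 ∩ x.2).card) * v x.2) * β = 0 := by
    rw [Finset.sum_product, Finset.sum_comm]
    have h5 : ∀ B ∈ P, ∑ A ∈ P, (cf ((A ∩ B).card) * v B) * β = ρ * v B * β := by
      intro B hB
      rw [← Finset.sum_mul, ← Finset.sum_mul, hcol B hB]
    rw [Finset.sum_congr rfl h5]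
    have h6 : ∀ B ∈ P, ρ * v B * β = (ρ * β) * v B := fun B _ => by ring
    rw [Finset.sum_congr rfl h6, ← Finset.mul_sum, hvsum, mul_zero]
  have T4 : ∑ x ∈ P ×ˢ P, cf ((x.1 ∩ x.2).card) * (β * β) = R * σ ^ 2 := by
    rw [Finset.sum_product]
    have : ∀ A ∈ P, ∑ B ∈ P, cf ((A ∩ B).card) * (β * β) = ρ * (β * β) := by
      intro A hA
      rw [← Finset.sum_mul, hrow A hA]
    rw [Finset.sum_congr rfl this, Finset.sum_const, nsmul_eq_mul, hcardP, hρ, hβ]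
    field_simp
  have T1 : ∑ x ∈ P ×ˢ P, cf ((x.1 ∩ x.2).card) * (v x.1 * v x.2) ≤ 0 := by
    have e1 : ∀ x ∈ P ×ˢ P, cf ((x.1 ∩ x.2).card) * (v x.1 * v x.2)
        = v x.1 * v x.2 - v x.1 * v x.2 * (1 / (((i - (x.1 ∩ x.2).card : ℕ) : ℝ) + 1)) := by
      intro x _
      rw [hcf]
      have h0 : (((i - (x.1 ∩ x.2).card : ℕ) : ℝ) + 1) ≠ 0 := by positivity
      field_simp
      ring
    rw [Finset.sum_congr rfl e1, Finset.sum_sub_distrib]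
    have e2 : ∑ x ∈ P ×ˢ P, v x.1 * v x.2 = 0 := by
      rw [Finset.sum_product, ← Finset.sum_mul_sum, hvsum]
      ring
    rw [e2]
    simp only [zero_sub, neg_nonpos]
    exact psdIneq v
  rw [T2, T3, T4]
  linarith [T1]


-- auxiliary defs
def outC {n : ℕ} (I : Finset (Fin n)) (η : Fin n → Bool) : ℕ :=
  (univ.filter fun i => i ∉ I ∧ η i = true).card

def inC {n : ℕ} (I : Finset (Fin n)) (η : Fin n → Bool) : ℕ :=
  (univ.filter fun i => i ∈ I ∧ η i = true).card

noncomputable def Gsum {n : ℕ} (μ : (Fin n → Bool) → ℝ) (I : Finset (Fin n))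
    (ξ : Fin n → Bool) (j : ℕ) : ℝ :=
  ∑ η ∈ univ.filter (fun η : Fin n → Bool =>
      (∀ i ∈ I, η i = ξ i) ∧ outC I η = j),
    μ η * μ (flipOutside I η)

variable {n : ℕ}

lemma flipOutside_flip_flip (I : Finset (Fin n)) (η : Fin n → Bool) :
    flipOutside I (flipOutside I η) = η := by
  funext j
  simp only [flipOutside]
  by_cases h : j ∈ I <;> simp [h]

lemma wt_eq_inC_add_outC (I : Finset (Fin n)) (η : Fin n → Bool) :
    wt η = inC I η + outC I η := by
  rw [wt, inC, outC]
  rw [← Finset.card_union_of_disjoint]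
  · congr 1
    ext j
    simp only [mem_filter, mem_union, mem_univ, true_and]
    by_cases h : j ∈ I <;> simp [h]
  · refine disjoint_left.mpr fun j hj hj2 => ?_
    exact (mem_filter.mp hj2).2.1 (mem_filter.mp hj).2.1

lemma inC_flip (I : Finset (Fin n)) (η : Fin n → Bool) :
    inC I (flipOutside I η) = inC I η := by
  rw [inC, inC]
  congr 1
  ext j
  simp only [mem_filter, mem_univ, true_and, flipOutside]
  by_cases h : j ∈ I <;> simp [h]

lemma outC_add_of_disagree (I : Finset (Fin n)) (η ζ : Fin n → Bool)
    (hdis : ∀ j, j ∉ I → η j ≠ ζ j) : outC I η + outC I ζ + I.card = n := by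
  have h1 : outC I ζ = (univ.filter fun i => i ∉ I ∧ η i = false).card := by
    rw [outC]
    congr 1
    ext j
    simp only [mem_filter, mem_univ, true_and]
    refine and_congr_right fun hj => ?_
    have := hdis j hj
    cases hη : η j <;> cases hζ : ζ j <;> simp_all
  rw [outC, h1]
  have h2 : (univ.filter fun i => i ∉ I ∧ η i = true) ∪
      (univ.filter fun i => i ∉ I ∧ η i = false) = univ.filter (fun i => i ∉ I) := by
    ext j
    simp only [mem_filter, mem_union, mem_univ, true_and]
    by_cases h : η j <;> simp [h]
  have h3 : Disjoint (univ.filter fun i => i ∉ I ∧ η i = true)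
      (univ.filter fun i => i ∉ I ∧ η i = false) := by
    refine disjoint_left.mpr fun j hj hj2 => ?_
    have := (mem_filter.mp hj).2.2
    have := (mem_filter.mp hj2).2.2
    simp_all
  rw [← Finset.card_union_of_disjoint h3, h2]
  have h5 : (univ.filter (fun i : Fin n => i ∈ I)) = I := by ext j; simp
  have h4 := Finset.card_filter_add_card_filter_not
    (s := (univ : Finset (Fin n))) (p := fun i : Fin n => i ∈ I)
  rw [h5, Finset.card_univ, Fintype.card_fin] at h4
  omega

lemma hG_key {t : ℕ} (μ : (Fin n → Bool) → ℝ) (hpos : ∀ η, 0 ≤ μ η)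
    (hAPP : ∀ k, 1 ≤ k → k ≤ t → 2 * k ≤ n →
      ∀ I : Finset (Fin n), I.card = n - 2 * k → ∀ ξ : Fin n → Bool,
        0 < condZ μ I ξ → condGamma μ I ξ (k - 1) ≤ condGamma μ I ξ k)
    (k : ℕ) (hk1 : 1 ≤ k) (hkt : k ≤ t) (I : Finset (Fin n)) (hI : I.card + 2 * k = n)
    (ξ : Fin n → Bool) :
    ((k : ℝ) + 1) * Gsum μ I ξ (k - 1) ≤ (k : ℝ) * Gsum μ I ξ k := by
  have h2k : 2 * k ≤ n := by omega
  have hIc : I.card = n - 2 * k := by omega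
  have hnI : n - I.card = 2 * k := by omega
  by_cases hZ : 0 < condZ μ I ξ
  · have happ := hAPP k hk1 hkt h2k I hIc ξ hZ
    have hgamma : ∀ j, condGamma μ I ξ j
        = ((2 * k).choose j : ℝ)⁻¹ * (Gsum μ I ξ j / (condZ μ I ξ) ^ 2) := by
      intro j
      rw [condGamma, hnI, Gsum, Finset.sum_div]
      congr 1
      refine Finset.sum_congr rfl fun η _ => ?_
      rw [div_mul_div_comm, sq]
    rw [hgamma, hgamma] at happ
    have hZ2 : (0:ℝ) < (condZ μ I ξ) ^ 2 := by positivity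
    have hc1 : (0:ℝ) < ((2 * k).choose (k - 1) : ℝ) := by
      exact_mod_cast Nat.choose_pos (by omega)
    have hc2 : (0:ℝ) < ((2 * k).choose k : ℝ) := by
      exact_mod_cast Nat.choose_pos (by omega)
    have hkey : ((2 * k).choose k : ℝ) * (k : ℝ) = ((2 * k).choose (k - 1) : ℝ) * ((k : ℝ) + 1) := by
      have h := Nat.choose_succ_right_eq (2 * k) (k - 1)
      have hk' : k - 1 + 1 = k := by omega
      have hk'' : 2 * k - (k - 1) = k + 1 := by omega
      rw [hk', hk''] at h
      exact_mod_cast congrArg (fun x : ℕ => (x : ℝ)) h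
    -- from happ : c1⁻¹ * (G1/Z²) ≤ c2⁻¹ * (G2/Z²) derive (k+1) G1 ≤ k G2
    set G1 := Gsum μ I ξ (k - 1)
    set G2 := Gsum μ I ξ k
    set Z2 := (condZ μ I ξ) ^ 2
    have h1 : G1 * ((2 * k).choose k : ℝ) ≤ G2 * ((2 * k).choose (k - 1) : ℝ) := by
      have hstep := mul_le_mul_of_nonneg_right happ (le_of_lt hZ2)
      rw [mul_assoc, mul_assoc, div_mul_cancel₀ _ (ne_of_gt hZ2),
        div_mul_cancel₀ _ (ne_of_gt hZ2)] at hstep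
      rw [inv_mul_eq_div, inv_mul_eq_div, div_le_div_iff₀ hc1 hc2] at hstep
      exact hstep
    have h7 : G1 * ((2 * k).choose k : ℝ) * ((k:ℝ) + 1)
        ≤ G2 * ((2 * k).choose (k - 1) : ℝ) * ((k:ℝ) + 1) :=
      mul_le_mul_of_nonneg_right h1 (by positivity)
    refine le_of_mul_le_mul_right ?_ hc2
    calc ((k:ℝ) + 1) * G1 * ((2 * k).choose k : ℝ)
        = G1 * ((2 * k).choose k : ℝ) * ((k:ℝ) + 1) := by ring
      _ ≤ G2 * ((2 * k).choose (k - 1) : ℝ) * ((k:ℝ) + 1) := h7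
      _ = (k:ℝ) * G2 * ((2 * k).choose k : ℝ) := by linear_combination (-G2) * hkey
  · have hZ0 : condZ μ I ξ = 0 := by
      have h0 : 0 ≤ condZ μ I ξ := Finset.sum_nonneg fun η _ => hpos η
      linarith [not_lt.mp hZ]
    have hall : ∀ η ∈ univ.filter (fun η : Fin n → Bool => ∀ i ∈ I, η i = ξ i), μ η = 0 := by
      have := (Finset.sum_eq_zero_iff_of_nonneg (fun η _ => hpos η)).mp hZ0
      exact this
    have hG0 : ∀ j, Gsum μ I ξ j = 0 := by
      intro j
      rw [Gsum]
      refine Finset.sum_eq_zero fun η hη => ?_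
      have hm := mem_filter.mp hη
      have : μ η = 0 := hall η (mem_filter.mpr ⟨mem_univ _, hm.2.1⟩)
      rw [this, zero_mul]
    rw [hG0, hG0, mul_zero, mul_zero]


lemma sum_sum_filter {α β : Type*} [DecidableEq α] [Fintype β] [DecidableEq β]
    (Q : Finset α) (F : α → Finset β) (f : α → β → ℝ) :
    ∑ p ∈ Q, ∑ η ∈ F p, f p η
      = ∑ x ∈ (Q ×ˢ (univ : Finset β)).filter (fun x => x.2 ∈ F x.1), f x.1 x.2 := by
  rw [Finset.sum_filter, Finset.sum_product]
  refine sum_congr rfl fun p _ => ?_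
  rw [← Finset.sum_filter]
  congr 1
  ext b; simp

lemma inC_eq_of_agree (I : Finset (Fin n)) (η ξ : Fin n → Bool)
    (h : ∀ j ∈ I, η j = ξ j) : inC I η = inC I ξ := by
  unfold inC; congr 1; ext j
  simp only [mem_filter, mem_univ, true_and]
  constructor
  · rintro ⟨hj, hj2⟩; exact ⟨hj, (h j hj) ▸ hj2⟩
  · rintro ⟨hj, hj2⟩; exact ⟨hj, (h j hj).symm ▸ hj2⟩

lemma wt_maskTo (I : Finset (Fin n)) (η : Fin n → Bool) :
    wt (maskTo I η) = inC I η := by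
  unfold wt inC maskTo; congr 1; ext j
  simp only [mem_filter, mem_univ, true_and]
  by_cases h : j ∈ I <;> simp [h]

lemma outC_zero (I : Finset (Fin n)) (ξ : Fin n → Bool) (h : ∀ j ∉ I, ξ j = false) :
    outC I ξ = 0 := by
  unfold outC
  rw [Finset.card_eq_zero]
  ext j
  simp only [mem_filter, mem_univ, true_and, notMem_empty, iff_false, not_and]
  intro hj
  simp [h j hj]

lemma wt_of_supp (I : Finset (Fin n)) (ξ : Fin n → Bool) (h : ∀ j ∉ I, ξ j = false) :
    wt ξ = inC I ξ := by
  rw [wt_eq_inC_add_outC I ξ, outC_zero I ξ h]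
  omega

lemma agr_flip (I : Finset (Fin n)) (η : Fin n → Bool) :
    agr η (flipOutside I η) = I := by
  ext j
  simp only [agr, mem_filter, mem_univ, true_and, flipOutside]
  by_cases h : j ∈ I
  · simp [h]
  · simp only [h, if_neg, iff_false]
    intro hc
    cases hη : η j <;> simp [hη] at hc <;> simp_all
  
lemma flip_agr (η ζ : Fin n → Bool) : flipOutside (agr η ζ) η = ζ := by
  funext j
  simp only [flipOutside, agr, mem_filter, mem_univ, true_and]
  by_cases h : η j = ζ j
  · simp [h]
  · simp only [h, if_neg, if_false]
    cases hη : η j <;> cases hζ : ζ j <;> simp_all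

lemma mask_agree (I : Finset (Fin n)) (η : Fin n → Bool) :
    ∀ j ∈ I, η j = maskTo I η j := by
  intro j hj; simp [maskTo, hj]

lemma mask_outside (I : Finset (Fin n)) (η : Fin n → Bool) :
    ∀ j ∉ I, maskTo I η j = false := by
  intro j hj; simp [maskTo, hj]

lemma disagree_flip (I : Finset (Fin n)) (η : Fin n → Bool) :
    ∀ j, j ∉ I → η j ≠ flipOutside I η j := by
  intro j hj
  simp only [flipOutside, if_neg hj]
  cases hη : η j <;> simp

lemma E1 {i : ℕ} (μ : (Fin n → Bool) → ℝ) (hi : 1 ≤ i) :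
    ∑ p ∈ QIdx n i, Gsum μ p.2.1 p.2.2 (p.1 - 1)
      = (∑ η ∈ univ.filter (fun η : Fin n → Bool => wt η = i - 1), μ η)
        * (∑ ζ ∈ univ.filter (fun ζ : Fin n → Bool => wt ζ = i + 1), μ ζ) := by
  rw [Finset.sum_mul_sum, ← Finset.sum_product']
  unfold Gsum
  rw [sum_sum_filter (QIdx n i)
    (fun p => univ.filter (fun η : Fin n → Bool => (∀ l ∈ p.2.1, η l = p.2.2 l) ∧ outC p.2.1 η = p.1 - 1))
    (fun p η => μ η * μ (flipOutside p.2.1 η))]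
  refine Finset.sum_nbij' (i := fun x => (x.2, flipOutside x.1.2.1 x.2))
    (j := fun y => ((outC (agr y.1 y.2) y.1 + 1, agr y.1 y.2, maskTo (agr y.1 y.2) y.1), y.1))
    ?_ ?_ ?_ ?_ ?_
  · -- forward membership
    rintro ⟨⟨k, I, ξ⟩, η⟩ hx
    simp only [QIdx, mem_filter, mem_product, mem_range, mem_powerset, mem_univ, true_and,
      and_true] at hx
    obtain ⟨⟨⟨hkrange, hIsub⟩, hk1, hcard, hsupp, hwtξ⟩, hagree, houtη⟩ := hx
    simp only [mem_product, mem_filter, mem_univ, true_and]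
    have hinη : inC I η = wt ξ := by
      rw [inC_eq_of_agree I η ξ hagree, ← wt_of_supp I ξ hsupp]
    have hflip_disagree := disagree_flip I η
    have houtflip := outC_add_of_disagree I η (flipOutside I η) hflip_disagree
    have hwtη : wt η = i - 1 := by
      rw [wt_eq_inC_add_outC I η, hinη, houtη]; omega
    have hwtζ : wt (flipOutside I η) = i + 1 := by
      rw [wt_eq_inC_add_outC I (flipOutside I η), inC_flip, hinη]; omega
    exact ⟨hwtη, hwtζ⟩
  · -- backward membership
    rintro ⟨η, ζ⟩ hy
    simp only [mem_product, mem_filter, mem_univ, true_and] at hy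
    obtain ⟨hwtη, hwtζ⟩ := hy
    have hdis : ∀ j, j ∉ agr η ζ → η j ≠ ζ j := by
      intro j hj
      simp only [agr, mem_filter, mem_univ, true_and] at hj
      exact hj
    have hadd := outC_add_of_disagree (agr η ζ) η ζ hdis
    have hinη : inC (agr η ζ) η = inC (agr η ζ) ζ := by
      refine inC_eq_of_agree (agr η ζ) η ζ fun j hj => ?_
      simp only [agr, mem_filter, mem_univ, true_and] at hj
      exact hj
    have h1 : inC (agr η ζ) η + outC (agr η ζ) η = i - 1 := by
      rw [← wt_eq_inC_add_outC]; exact hwtη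
    have h2 : inC (agr η ζ) η + outC (agr η ζ) ζ = i + 1 := by
      rw [hinη, ← wt_eq_inC_add_outC]; exact hwtζ
    simp only [QIdx, mem_filter, mem_product, mem_range, mem_powerset, mem_univ, true_and,
      and_true]
    refine ⟨⟨⟨by omega, subset_univ _⟩, by omega, by omega, mask_outside (agr η ζ) η, ?_⟩,
      fun j hj => (mask_agree (agr η ζ) η j hj), by omega⟩
    rw [wt_maskTo]
    omega
  · -- left inverse
    rintro ⟨⟨k, I, ξ⟩, η⟩ hx
    simp only [QIdx, mem_filter, mem_product, mem_range, mem_powerset, mem_univ, true_and,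
      and_true] at hx
    obtain ⟨⟨⟨hkrange, hIsub⟩, hk1, hcard, hsupp, hwtξ⟩, hagree, houtη⟩ := hx
    have hagrI : agr η (flipOutside I η) = I := agr_flip I η
    have hmask : maskTo I η = ξ := by
      funext j
      by_cases hj : j ∈ I
      · rw [← mask_agree I η j hj]; exact hagree j hj
      · rw [mask_outside I η j hj, hsupp j hj]
    simp only [hagrI, hmask, houtη]
    have : k - 1 + 1 = k := by omega
    rw [this]
  · -- right inverse
    rintro ⟨η, ζ⟩ hy
    simp only [flip_agr]
  · -- value equality
    rintro ⟨⟨k, I, ξ⟩, η⟩ hx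
    rfl


lemma comOnes_flip (I : Finset (Fin n)) (η : Fin n → Bool) :
    comOnes η (flipOutside I η) = inC I η := by
  unfold comOnes inC
  congr 1
  ext j
  simp only [mem_filter, mem_univ, true_and, flipOutside]
  by_cases h : j ∈ I
  · simp [h, and_comm]
  · simp only [h, if_neg, if_false]
    cases hη : η j <;> simp [h, hη]

lemma comOnes_agr (η ζ : Fin n → Bool) :
    comOnes η ζ = inC (agr η ζ) η := by
  unfold comOnes inC agr
  congr 1
  ext j
  simp only [mem_filter, mem_univ, true_and]
  constructor
  · rintro ⟨h1, h2⟩; exact ⟨by rw [h1, h2], h1⟩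
  · rintro ⟨h1, h2⟩; exact ⟨h2, by rw [← h1, h2]⟩

lemma eq_of_agr_card (η ζ : Fin n → Bool) (h : (agr η ζ).card = n) : η = ζ := by
  have : agr η ζ = univ := by
    apply Finset.eq_univ_of_card
    simp [h]
  funext j
  have hj : j ∈ agr η ζ := this ▸ mem_univ j
  exact (mem_filter.mp hj).2

lemma E2 {i : ℕ} (μ : (Fin n → Bool) → ℝ) :
    ∑ p ∈ QIdx n i, ((p.1 : ℝ) / ((p.1 : ℝ) + 1)) * Gsum μ p.2.1 p.2.2 p.1
      = ∑ y ∈ ((univ.filter (fun η : Fin n → Bool => wt η = i)) ×ˢ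
            (univ.filter (fun ζ : Fin n → Bool => wt ζ = i))).filter (fun y => y.1 ≠ y.2),
          (((i - comOnes y.1 y.2 : ℕ) : ℝ) / (((i - comOnes y.1 y.2 : ℕ) : ℝ) + 1))
            * (μ y.1 * μ y.2) := by
  unfold Gsum
  simp only [Finset.mul_sum]
  rw [sum_sum_filter (QIdx n i)
    (fun p => univ.filter (fun η : Fin n → Bool => (∀ l ∈ p.2.1, η l = p.2.2 l) ∧ outC p.2.1 η = p.1))
    (fun p η => ((p.1 : ℝ) / ((p.1 : ℝ) + 1)) * (μ η * μ (flipOutside p.2.1 η)))]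
  refine Finset.sum_nbij' (i := fun x => (x.2, flipOutside x.1.2.1 x.2))
    (j := fun y => ((outC (agr y.1 y.2) y.1, agr y.1 y.2, maskTo (agr y.1 y.2) y.1), y.1))
    ?_ ?_ ?_ ?_ ?_
  · -- forward membership
    rintro ⟨⟨k, I, ξ⟩, η⟩ hx
    simp only [QIdx, mem_filter, mem_product, mem_range, mem_powerset, mem_univ, true_and,
      and_true] at hx
    obtain ⟨⟨⟨hkrange, hIsub⟩, hk1, hcard, hsupp, hwtξ⟩, hagree, houtη⟩ := hx
    simp only [mem_filter, mem_product, mem_univ, true_and]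
    have hinη : inC I η = wt ξ := by
      rw [inC_eq_of_agree I η ξ hagree, ← wt_of_supp I ξ hsupp]
    have houtflip := outC_add_of_disagree I η (flipOutside I η) (disagree_flip I η)
    have hwtη : wt η = i := by
      rw [wt_eq_inC_add_outC I η, hinη, houtη]; omega
    have hwtζ : wt (flipOutside I η) = i := by
      rw [wt_eq_inC_add_outC I (flipOutside I η), inC_flip, hinη]; omega
    refine ⟨⟨hwtη, hwtζ⟩, ?_⟩
    -- η ≠ flipOutside I η
    have hIne : I.card < n := by omega
    have : ∃ j, j ∉ I := by
      by_contra hc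
      push_neg at hc
      have : I = univ := Finset.eq_univ_of_forall hc
      rw [this, Finset.card_univ, Fintype.card_fin] at hIne
      omega
    obtain ⟨j, hj⟩ := this
    intro hcontra
    exact disagree_flip I η j hj (congrFun hcontra j)
  · -- backward membership
    rintro ⟨η, ζ⟩ hy
    simp only [mem_filter, mem_product, mem_univ, true_and] at hy
    obtain ⟨⟨hwtη, hwtζ⟩, hne⟩ := hy
    have hdis : ∀ j, j ∉ agr η ζ → η j ≠ ζ j := by
      intro j hj
      simp only [agr, mem_filter, mem_univ, true_and] at hj
      exact hj
    have hadd := outC_add_of_disagree (agr η ζ) η ζ hdis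
    have hinη : inC (agr η ζ) η = inC (agr η ζ) ζ := by
      refine inC_eq_of_agree (agr η ζ) η ζ fun j hj => ?_
      simp only [agr, mem_filter, mem_univ, true_and] at hj
      exact hj
    have h1 : inC (agr η ζ) η + outC (agr η ζ) η = i := by
      rw [← wt_eq_inC_add_outC]; exact hwtη
    have h2 : inC (agr η ζ) η + outC (agr η ζ) ζ = i := by
      rw [hinη, ← wt_eq_inC_add_outC]; exact hwtζ
    have hk1 : 1 ≤ outC (agr η ζ) η := by
      by_contra hc
      push_neg at hc
      have h0 : outC (agr η ζ) η = 0 := by omega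
      have : (agr η ζ).card = n := by omega
      exact hne (eq_of_agr_card η ζ this)
    simp only [QIdx, mem_filter, mem_product, mem_range, mem_powerset, mem_univ, true_and,
      and_true]
    refine ⟨⟨⟨by omega, subset_univ _⟩, hk1, by omega, mask_outside (agr η ζ) η, ?_⟩,
      fun j hj => (mask_agree (agr η ζ) η j hj)⟩
    rw [wt_maskTo]
    omega
  · -- left inverse
    rintro ⟨⟨k, I, ξ⟩, η⟩ hx
    simp only [QIdx, mem_filter, mem_product, mem_range, mem_powerset, mem_univ, true_and,
      and_true] at hx
    obtain ⟨⟨⟨hkrange, hIsub⟩, hk1, hcard, hsupp, hwtξ⟩, hagree, houtη⟩ := hx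
    have hagrI : agr η (flipOutside I η) = I := agr_flip I η
    have hmask : maskTo I η = ξ := by
      funext j
      by_cases hj : j ∈ I
      · rw [← mask_agree I η j hj]; exact hagree j hj
      · rw [mask_outside I η j hj, hsupp j hj]
    simp only [hagrI, hmask, houtη]
  · -- right inverse
    rintro ⟨η, ζ⟩ hy
    simp only [flip_agr]
  · -- value equality
    rintro ⟨⟨k, I, ξ⟩, η⟩ hx
    simp only [QIdx, mem_filter, mem_product, mem_range, mem_powerset, mem_univ, true_and,
      and_true] at hx
    obtain ⟨⟨⟨hkrange, hIsub⟩, hk1, hcard, hsupp, hwtξ⟩, hagree, houtη⟩ := hx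
    have hm : comOnes η (flipOutside I η) = inC I η := comOnes_flip I η
    have hinη : inC I η = wt ξ := by
      rw [inC_eq_of_agree I η ξ hagree, ← wt_of_supp I ξ hsupp]
    have hik : i - comOnes η (flipOutside I η) = k := by omega
    simp only [hik]


lemma comOnes_self (η : Fin n → Bool) : comOnes η η = wt η := by
  unfold comOnes wt; congr 1; ext j; simp

lemma indic_onesF (η : Fin n → Bool) : indic (onesF η) = η := by
  funext j
  simp only [indic, onesF, mem_filter, mem_univ, true_and]
  cases h : η j <;> simp [h]

lemma onesF_indic (A : Finset (Fin n)) : onesF (indic A) = A := by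
  ext j
  simp [onesF, indic]

lemma wt_onesF (η : Fin n → Bool) : wt η = (onesF η).card := rfl

lemma comOnes_eq_inter (η ζ : Fin n → Bool) :
    comOnes η ζ = (onesF η ∩ onesF ζ).card := by
  unfold comOnes onesF; congr 1; ext j; simp [mem_inter]

lemma inC_le_card (I : Finset (Fin n)) (ξ : Fin n → Bool) : inC I ξ ≤ I.card := by
  apply card_le_card
  intro j hj
  exact (mem_filter.mp hj).2.1

lemma wt_le (η : Fin n → Bool) : wt η ≤ n := by
  calc wt η ≤ (univ : Finset (Fin n)).card := card_filter_le _ _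
    _ = n := by simp

lemma rank_high_zero (μ : (Fin n → Bool) → ℝ) {j : ℕ} (h : n < j) : rankSeq μ j = 0 := by
  rw [rankSeq]
  apply Finset.sum_eq_zero
  intro η hη
  have := (mem_filter.mp hη).2
  have := wt_le η
  omega

-- the main inequality
lemma main_ineq {t : ℕ} (μ : (Fin n → Bool) → ℝ) (hpos : ∀ η, 0 ≤ μ η)
    (hAPP : ∀ k, 1 ≤ k → k ≤ t → 2 * k ≤ n →
      ∀ I : Finset (Fin n), I.card = n - 2 * k → ∀ ξ : Fin n → Bool,
        0 < condZ μ I ξ → condGamma μ I ξ (k - 1) ≤ condGamma μ I ξ k)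
    {i : ℕ} (hi1 : 1 ≤ i) (hin : i + 1 ≤ n) (hcase : i ≤ t ∨ n ≤ i + t) :
    rankSeq μ (i - 1) * rankSeq μ (i + 1)
      ≤ ((i : ℝ) * ((n - i : ℕ) : ℝ)) / (((i : ℝ) + 1) * (((n - i : ℕ) : ℝ) + 1))
          * (rankSeq μ i) ^ 2 := by
  have step1 : rankSeq μ (i - 1) * rankSeq μ (i + 1)
      ≤ ∑ p ∈ QIdx n i, ((p.1 : ℝ) / ((p.1 : ℝ) + 1)) * Gsum μ p.2.1 p.2.2 p.1 := by
    rw [rankSeq, rankSeq, ← E1 μ hi1]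
    apply Finset.sum_le_sum
    rintro ⟨k, I, ξ⟩ hp
    simp only [QIdx, mem_filter, mem_product, mem_range, mem_powerset, mem_univ, true_and,
      and_true] at hp
    obtain ⟨⟨hkrange, hIsub⟩, hk1, hcard, hsupp, hwtξ⟩ := hp
    have hwtle : wt ξ ≤ I.card := by rw [wt_of_supp I ξ hsupp]; exact inC_le_card I ξ
    have hkt : k ≤ t := by omega
    have hG := hG_key μ hpos hAPP k hk1 hkt I hcard ξ
    have hkpos : (0:ℝ) < (k:ℝ) + 1 := by positivity
    rw [div_mul_eq_mul_div, le_div_iff₀ hkpos]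
    linarith
  refine le_trans step1 ?_
  rw [E2 μ]
  -- extend to full product (diagonal terms vanish)
  rw [Finset.sum_filter_of_ne (by
    rintro ⟨η, ζ⟩ hy hne hcontra
    apply hne
    simp only at hcontra
    rw [hcontra] at hy ⊢
    simp only [mem_product, mem_filter, mem_univ, true_and] at hy
    rw [comOnes_self, hy.2, Nat.sub_self] at *
    simp)]
  -- transfer to finsets
  have transfer : ∑ y ∈ (univ.filter (fun η : Fin n → Bool => wt η = i)) ×ˢ
        (univ.filter (fun ζ : Fin n → Bool => wt ζ = i)),
      (((i - comOnes y.1 y.2 : ℕ) : ℝ) / (((i - comOnes y.1 y.2 : ℕ) : ℝ) + 1))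
        * (μ y.1 * μ y.2)
      = ∑ x ∈ (powersetCard i (univ : Finset (Fin n))) ×ˢ powersetCard i univ,
        (((i - (x.1 ∩ x.2).card : ℕ) : ℝ) / (((i - (x.1 ∩ x.2).card : ℕ) : ℝ) + 1))
          * (μ (indic x.1) * μ (indic x.2)) := by
    refine Finset.sum_nbij' (i := fun y => (onesF y.1, onesF y.2))
      (j := fun x => (indic x.1, indic x.2)) ?_ ?_ ?_ ?_ ?_
    · rintro ⟨η, ζ⟩ hy
      simp only [mem_product, mem_filter, mem_univ, true_and] at hy ⊢
      simp only [mem_powersetCard]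
      exact ⟨⟨subset_univ _, (wt_onesF η) ▸ hy.1⟩, ⟨subset_univ _, (wt_onesF ζ) ▸ hy.2⟩⟩
    · rintro ⟨A, B⟩ hx
      simp only [mem_product, mem_powersetCard] at hx
      simp only [mem_product, mem_filter, mem_univ, true_and]
      constructor
      · rw [wt_onesF, onesF_indic]; exact hx.1.2
      · rw [wt_onesF, onesF_indic]; exact hx.2.2
    · rintro ⟨η, ζ⟩ _
      simp only [indic_onesF]
    · rintro ⟨A, B⟩ _
      simp only [onesF_indic]
    · rintro ⟨η, ζ⟩ _
      simp only [comOnes_eq_inter, indic_onesF]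
  rw [transfer]
  have hrank : rankSeq μ i = ∑ A ∈ powersetCard i (univ : Finset (Fin n)), μ (indic A) := by
    rw [rankSeq]
    refine Finset.sum_nbij' (i := fun η => onesF η) (j := fun A => indic A) ?_ ?_ ?_ ?_ ?_
    · intro η hη
      simp only [mem_filter, mem_univ, true_and] at hη
      exact mem_powersetCard.mpr ⟨subset_univ _, (wt_onesF η) ▸ hη⟩
    · intro A hA
      simp only [mem_filter, mem_univ, true_and]
      rw [wt_onesF, onesF_indic]
      exact (mem_powersetCard.mp hA).2
    · intro η _; exact indic_onesF η
    · intro A _; exact onesF_indic A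
    · intro η _; rw [indic_onesF]
  rw [hrank]
  exact stepA (by omega) (fun A => μ (indic A))

theorem capp_local_ulc {n t : ℕ} (μ : (Fin n → Bool) → ℝ)
    (hpos : ∀ η, 0 ≤ μ η) (hsum : ∑ η : Fin n → Bool, μ η = 1)
    (hAPP : ∀ k, 1 ≤ k → k ≤ t → 2 * k ≤ n →
      ∀ I : Finset (Fin n), I.card = n - 2 * k → ∀ ξ : Fin n → Bool,
        0 < condZ μ I ξ → condGamma μ I ξ (k - 1) ≤ condGamma μ I ξ k) :
    (∀ i, 1 ≤ i → i ≤ t →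
      (rankSeq μ (i - 1) / (n.choose (i - 1) : ℝ)) *
          (rankSeq μ (i + 1) / (n.choose (i + 1) : ℝ)) ≤
        (rankSeq μ i / (n.choose i : ℝ)) ^ 2) ∧
    (∀ i, n - t ≤ i → i ≤ n - 1 → 1 ≤ i →
      (rankSeq μ (i - 1) / (n.choose (i - 1) : ℝ)) *
          (rankSeq μ (i + 1) / (n.choose (i + 1) : ℝ)) ≤
        (rankSeq μ i / (n.choose i : ℝ)) ^ 2) := by
  have main : ∀ i : ℕ, 1 ≤ i → i + 1 ≤ n → (i ≤ t ∨ n ≤ i + t) →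
      (rankSeq μ (i - 1) / (n.choose (i - 1) : ℝ)) *
          (rankSeq μ (i + 1) / (n.choose (i + 1) : ℝ)) ≤
        (rankSeq μ i / (n.choose i : ℝ)) ^ 2 := by
    intro i hi1 hin hcase
    have key := main_ineq μ hpos hAPP hi1 hin hcase
    have hC : (0:ℝ) < (n.choose i : ℝ) := by
      exact_mod_cast Nat.choose_pos (by omega)
    have hCm : (0:ℝ) < (n.choose (i-1) : ℝ) := by
      exact_mod_cast Nat.choose_pos (by omega)
    have hCp : (0:ℝ) < (n.choose (i+1) : ℝ) := by
      exact_mod_cast Nat.choose_pos hin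
    have hA : (n.choose i : ℝ) * (i : ℝ) = (n.choose (i-1) : ℝ) * (((n - i : ℕ) : ℝ) + 1) := by
      have h := Nat.choose_succ_right_eq n (i - 1)
      have e1 : i - 1 + 1 = i := by omega
      have e2 : n - (i - 1) = (n - i) + 1 := by omega
      rw [e1, e2] at h
      exact_mod_cast congrArg (fun x : ℕ => (x : ℝ)) h
    have hB : (n.choose (i+1) : ℝ) * ((i : ℝ) + 1) = (n.choose i : ℝ) * ((n - i : ℕ) : ℝ) := by
      have h := Nat.choose_succ_right_eq n i
      exact_mod_cast congrArg (fun x : ℕ => (x : ℝ)) h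
    have hRC : (n.choose (i-1) : ℝ) * (n.choose (i+1) : ℝ)
        = ((i : ℝ) * ((n - i : ℕ) : ℝ)) / (((i : ℝ) + 1) * (((n - i : ℕ) : ℝ) + 1))
            * (n.choose i : ℝ) ^ 2 := by
      have hb1 : (((n - i : ℕ) : ℝ) + 1) ≠ 0 := by positivity
      have hi1' : ((i : ℝ) + 1) ≠ 0 := by positivity
      have hCm' : (n.choose (i-1) : ℝ) = (n.choose i : ℝ) * (i:ℝ) / (((n - i : ℕ) : ℝ) + 1) := by
        rw [eq_div_iff hb1]; linarith [hA]
      have hCp' : (n.choose (i+1) : ℝ) = (n.choose i : ℝ) * ((n - i : ℕ) : ℝ) / ((i:ℝ) + 1) := by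
        rw [eq_div_iff hi1']; linarith [hB]
      rw [hCm', hCp']
      field_simp
    rw [div_mul_div_comm, div_pow, div_le_div_iff₀ (by positivity) (by positivity)]
    calc rankSeq μ (i-1) * rankSeq μ (i+1) * ((n.choose i:ℝ))^2
        ≤ (((i : ℝ) * ((n - i : ℕ) : ℝ)) / (((i : ℝ) + 1) * (((n - i : ℕ) : ℝ) + 1))
            * (rankSeq μ i) ^ 2) * ((n.choose i:ℝ))^2 :=
          mul_le_mul_of_nonneg_right key (by positivity)
      _ = (rankSeq μ i)^2 * (((i : ℝ) * ((n - i : ℕ) : ℝ)) / (((i : ℝ) + 1) * (((n - i : ℕ) : ℝ) + 1)) * ((n.choose i:ℝ))^2) := by ring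
      _ = (rankSeq μ i)^2 * ((n.choose (i-1) : ℝ) * (n.choose (i+1) : ℝ)) := by rw [← hRC]
  constructor
  · intro i hi1 hit
    by_cases hin : i + 1 ≤ n
    · exact main i hi1 hin (Or.inl hit)
    · have h0 : rankSeq μ (i+1) = 0 := rank_high_zero μ (by omega)
      rw [h0, zero_div, mul_zero]
      positivity
  · intro i hnt hin1 hi1
    have hn1 : 1 ≤ n := by omega
    exact main i hi1 (by omega) (Or.inr (by omega))
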